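/- For every real number a with 0 < a < 1, ∫_{−π}^{π} dω / |1 − a − e^{iω}| = (4/(2 − a)) · K(√(1 − a)/(1 − a/2)), where K(k) = ∫_0^{π/2} dθ / √(1 − k² sin² θ) is the complete elliptic integral of the first kind. -/

import Mathlib

open MeasureTheory Real

/-- The complete elliptic integral of the first kind,
`K(k) = ∫ θ in [0, π/2], dθ / √(1 - k² sin² θ)`. -/
noncomputable def ellipticK (k : ℝ) : ℝ :=
  ∫ θ in Set.Icc 0 (π / 2), 1 / Real.sqrt (1 - k ^ 2 * Real.sin θ ^ 2)

theorem integral_inv_modulus_eq_ellipticK (a : ℝ) (ha0 : 0 < a) (ha1 : a < 1) :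
    (∫ ω in Set.Icc (-π) π,
        1 / ‖(1 : ℂ) - (a : ℂ) - Complex.exp (Complex.I * (ω : ℂ))‖)
      = (4 / (2 - a)) * ellipticK (Real.sqrt (1 - a) / (1 - a / 2)) := by
  set k : ℝ := Real.sqrt (1 - a) / (1 - a / 2) with hk
  have h1a : (0:ℝ) < 1 - a := by linarith
  have h2a : (0:ℝ) < 2 - a := by linarith
  have h1a2 : (0:ℝ) < 1 - a / 2 := by linarith
  have hk2 : k ^ 2 = (1 - a) / (1 - a / 2) ^ 2 := by
    rw [hk, div_pow, Real.sq_sqrt h1a.le]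
  have hk2lt : k ^ 2 < 1 := by
    rw [hk2, div_lt_one (by positivity)]
    nlinarith
  -- positivity of 1 - k² cos² and 1 - k² sin²
  have hposc : ∀ x : ℝ, 0 < 1 - k ^ 2 * Real.cos x ^ 2 := by
    intro x
    nlinarith [Real.cos_sq_le_one x, sq_nonneg (Real.cos x), sq_nonneg k,
      mul_le_of_le_one_right (sq_nonneg k) (Real.cos_sq_le_one x)]
  have hposs : ∀ x : ℝ, 0 < 1 - k ^ 2 * Real.sin x ^ 2 := by
    intro x
    nlinarith [Real.sin_sq_le_one x, sq_nonneg (Real.sin x),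
      mul_le_of_le_one_right (sq_nonneg k) (Real.sin_sq_le_one x)]
  -- pointwise computation of the norm
  have hnorm : ∀ ω : ℝ, ‖(1 : ℂ) - (a : ℂ) - Complex.exp (Complex.I * (ω : ℂ))‖
      = (2 - a) * Real.sqrt (1 - k ^ 2 * Real.cos (ω / 2) ^ 2) := by
    intro ω
    have hz : (1 : ℂ) - (a : ℂ) - Complex.exp (Complex.I * (ω : ℂ))
        = ((1 - a - Real.cos ω : ℝ) : ℂ) + ((-(Real.sin ω) : ℝ) : ℂ) * Complex.I := by
      rw [mul_comm, Complex.exp_mul_I, ← Complex.ofReal_cos, ← Complex.ofReal_sin]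
      push_cast
      ring
    rw [hz, Complex.norm_def, Complex.normSq_add_mul_I]
    have harg : (1 - a - Real.cos ω) ^ 2 + (-(Real.sin ω)) ^ 2
        = (2 - a) ^ 2 * (1 - k ^ 2 * Real.cos (ω / 2) ^ 2) := by
      have hc : Real.cos ω = 2 * Real.cos (ω / 2) ^ 2 - 1 := by
        have := Real.cos_sq (ω / 2)
        rw [show 2 * (ω / 2) = ω by ring] at this
        linarith
      have hs : Real.sin ω ^ 2 = 1 - Real.cos ω ^ 2 := Real.sin_sq ω
      rw [hk2]
      field_simp
      nlinarith [hc, hs]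
    rw [harg, Real.sqrt_mul (sq_nonneg _), Real.sqrt_sq h2a.le]
  -- the half-angle integrand
  set g : ℝ → ℝ := fun θ => 1 / Real.sqrt (1 - k ^ 2 * Real.cos θ ^ 2) with hg
  have hgcont : Continuous g := by
    apply continuous_const.div
    · exact (continuous_const.sub (continuous_const.mul
        ((Real.continuous_cos.pow 2)))).sqrt
    · intro x
      exact (Real.sqrt_pos.mpr (hposc x)).ne'
  have hgeven : ∀ x : ℝ, g (-x) = g x := by
    intro x; simp [hg, Real.cos_neg]
  -- rewrite integrand
  have hintegrand : ∀ ω : ℝ,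
      1 / ‖(1 : ℂ) - (a : ℂ) - Complex.exp (Complex.I * (ω : ℂ))‖
        = (2 - a)⁻¹ * g (ω / 2) := by
    intro ω
    rw [hnorm ω, hg]
    simp only [one_div, mul_inv]
  calc (∫ ω in Set.Icc (-π) π,
        1 / ‖(1 : ℂ) - (a : ℂ) - Complex.exp (Complex.I * (ω : ℂ))‖)
      = ∫ ω in Set.Icc (-π) π, (2 - a)⁻¹ * g (ω / 2) := by
        exact setIntegral_congr_fun measurableSet_Icc fun ω _ => hintegrand ω
    _ = (2 - a)⁻¹ * ∫ ω in (-π:ℝ)..π, g (ω / 2) := by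
        rw [integral_Icc_eq_integral_Ioc, ← intervalIntegral.integral_of_le
          (by linarith [Real.pi_pos] : (-π:ℝ) ≤ π), intervalIntegral.integral_const_mul]
    _ = (2 - a)⁻¹ * (2 * ∫ θ in (-(π/2):ℝ)..(π/2), g θ) := by
        rw [intervalIntegral.integral_comp_div g (two_ne_zero)]
        norm_num [neg_div]
    _ = (2 - a)⁻¹ * (2 * (2 * ∫ θ in (0:ℝ)..(π/2), g θ)) := by
        congr 2
        have hsplit : (∫ θ in (-(π/2):ℝ)..(π/2), g θ)
            = (∫ θ in (-(π/2):ℝ)..(0:ℝ), g θ) + ∫ θ in (0:ℝ)..(π/2), g θ := by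
          rw [intervalIntegral.integral_add_adjacent_intervals
            (hgcont.intervalIntegrable _ _) (hgcont.intervalIntegrable _ _)]
        have hneg : (∫ θ in (-(π/2):ℝ)..(0:ℝ), g θ) = ∫ θ in (0:ℝ)..(π/2), g θ := by
          have := intervalIntegral.integral_comp_neg (a := (0:ℝ)) (b := π/2) g
          rw [neg_zero] at this
          rw [← this]
          simp only [hgeven]
        rw [hsplit, hneg]; ring
    _ = (2 - a)⁻¹ * (2 * (2 * ∫ θ in (0:ℝ)..(π/2),
          1 / Real.sqrt (1 - k ^ 2 * Real.sin θ ^ 2))) := by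
        congr 2
        have := intervalIntegral.integral_comp_sub_left (a := (0:ℝ)) (b := π/2) g (π/2)
        simp only [sub_self, sub_zero] at this
        rw [← this]
        congr 1
        apply intervalIntegral.integral_congr
        intro x _
        simp [hg, Real.cos_pi_div_two_sub]
    _ = (4 / (2 - a)) * ellipticK k := by
        rw [ellipticK, integral_Icc_eq_integral_Ioc, ← intervalIntegral.integral_of_le
          (by positivity : (0:ℝ) ≤ π/2)]
        ring
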